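/- (Theorem 1 of the paper.) Let A be an adjacency matrix obtained from a γ-corrupt SBM with K communities (Ω_k), connectivity matrix Γ ∈ [0,1]^{K×K}, and inlier set F (meaning A_{F×F} agrees with a sample A₀ of the SBM restricted to F). Let S₁,…,S_K be nonempty disjoint subsets of {1,…,n} with union S, let Γ̂_{kl} be the empirical edge densities between S_k and S_l, and Q̂(S) = 𝐒 Γ̂ 𝐒ᵀ. Then ∑_{k=1}^K ∑_{l=k}^K |Γ_{kl} − Γ̂_{kl}| ≤ (K² / min_k |Ω_k ∩ S_k ∩ F|) · ( max_k Γ_{kk} + ‖A_F − 𝔼[A]_F‖ + ‖A_S − Q̂(S)‖ ). -/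

import Mathlib

open Matrix Finset

/-- Spectral (operator) norm of a real matrix, via its action on Euclidean space. -/
noncomputable def specNorm {m n : Type*} [Fintype m] [Fintype n] [DecidableEq n]
    (M : Matrix m n ℝ) : ℝ :=
  ‖LinearMap.toContinuousLinearMap (Matrix.toEuclideanLin M)‖

/-- Restriction of a matrix to the rows and columns indexed by a finset `S`. -/
def restrict {n : ℕ} (A : Matrix (Fin n) (Fin n) ℝ) (S : Finset (Fin n)) :
    Matrix S S ℝ :=
  A.submatrix (↑·) (↑·)

/-- The `|S| × K` indicator matrix of the partition `(Sk k)` of `S`. -/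
def indicatorMatrix {n K : ℕ} (Sk : Fin K → Finset (Fin n)) (S : Finset (Fin n)) :
    Matrix S (Fin K) ℝ :=
  fun i k => if (i : Fin n) ∈ Sk k then 1 else 0

/-- Empirical edge densities `Γ̂_{kl}` between the blocks `Sk k` and `Sk l`. -/
noncomputable def empDensity {n K : ℕ} (A : Matrix (Fin n) (Fin n) ℝ)
    (Sk : Fin K → Finset (Fin n)) : Matrix (Fin K) (Fin K) ℝ :=
  fun k l => (∑ i ∈ Sk k, ∑ j ∈ Sk l, A i j) / (((Sk k).card : ℝ) * ((Sk l).card : ℝ))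

/-- The block-constant estimate `Q̂(S) = 𝐒 Γ̂ 𝐒ᵀ` of the expected adjacency matrix on `S`. -/
noncomputable def Qhat {n K : ℕ} (A : Matrix (Fin n) (Fin n) ℝ)
    (Sk : Fin K → Finset (Fin n)) (S : Finset (Fin n)) : Matrix S S ℝ :=
  indicatorMatrix Sk S * empDensity A Sk * (indicatorMatrix Sk S)ᵀ

lemma quad_bound {ι : Type*} [Fintype ι] [DecidableEq ι] (M : Matrix ι ι ℝ)
    (x y : EuclideanSpace ℝ ι) :
    |∑ i, ∑ j, x i * M i j * y j| ≤ specNorm M * ‖x‖ * ‖y‖ := by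
  have h1 : (∑ i, ∑ j, x i * M i j * y j)
      = inner ℝ x ((LinearMap.toContinuousLinearMap (Matrix.toEuclideanLin M)) y) := by
    simp only [LinearMap.coe_toContinuousLinearMap', toEuclideanLin_apply]
    rw [PiLp.inner_apply]
    simp only [RCLike.inner_apply, conj_trivial]
    refine Finset.sum_congr rfl fun i _ => ?_
    have : (M *ᵥ y.ofLp) i
        = ∑ j, M i j * y j := by
      show (M *ᵥ fun j => y j) i = _
      rfl
    rw [this, Finset.sum_mul]
    exact Finset.sum_congr rfl fun j _ => by ring
  rw [h1]
  calc |inner ℝ x ((LinearMap.toContinuousLinearMap (Matrix.toEuclideanLin M)) y)|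
      ≤ ‖x‖ * ‖(LinearMap.toContinuousLinearMap (Matrix.toEuclideanLin M)) y‖ :=
        abs_real_inner_le_norm _ _
    _ ≤ ‖x‖ * (specNorm M * ‖y‖) := by
        gcongr; exact ContinuousLinearMap.le_opNorm _ _
    _ = specNorm M * ‖x‖ * ‖y‖ := by ring

lemma ind_sum {n : ℕ} {U T : Finset (Fin n)} (hsub : T ⊆ U) (f : Fin n → ℝ) :
    ∑ i : U, (if (i : Fin n) ∈ T then (1:ℝ) else 0) * f i = ∑ i ∈ T, f i := by
  rw [Finset.sum_coe_sort U (fun a => (if a ∈ T then (1:ℝ) else 0) * f a)]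
  calc ∑ i ∈ U, (if i ∈ T then (1:ℝ) else 0) * f i
      = ∑ i ∈ U, if i ∈ T then f i else 0 :=
        Finset.sum_congr rfl fun i _ => by split <;> simp
    _ = ∑ i ∈ U ∩ T, f i := Finset.sum_ite_mem _ _ _
    _ = ∑ i ∈ T, f i := by rw [Finset.inter_eq_right.mpr hsub]

lemma ind_norm {n : ℕ} {U T : Finset (Fin n)} (hsub : T ⊆ U)
    (x : EuclideanSpace ℝ U) (hxd : ∀ i : U, x i = if (i : Fin n) ∈ T then (1:ℝ) else 0) :
    ‖x‖ = Real.sqrt T.card := by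
  rw [EuclideanSpace.norm_eq]
  congr 1
  have : ∑ i : U, ‖x i‖ ^ 2
      = ∑ i : U, (if (i : Fin n) ∈ T then (1:ℝ) else 0) * 1 := by
    refine Finset.sum_congr rfl fun i _ => by rw [hxd i]; split <;> simp
  rw [this, ind_sum hsub (fun _ => (1:ℝ))]
  simp

lemma block_bound {n : ℕ} (U T T' : Finset (Fin n)) (hT : T ⊆ U) (hT' : T' ⊆ U)
    (M : Matrix U U ℝ) (f : Fin n → Fin n → ℝ)
    (hM : ∀ (i j : U), (i : Fin n) ∈ T → (j : Fin n) ∈ T' → M i j = f i j) :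
    |∑ i ∈ T, ∑ j ∈ T', f i j|
      ≤ specNorm M * Real.sqrt T.card * Real.sqrt T'.card := by
  classical
  set x : EuclideanSpace ℝ U := WithLp.toLp 2 (fun i : U => if (i : Fin n) ∈ T then (1:ℝ) else 0) with hx
  set y : EuclideanSpace ℝ U := WithLp.toLp 2 (fun i : U => if (i : Fin n) ∈ T' then (1:ℝ) else 0) with hy
  have hsum : ∑ i : U, ∑ j : U, x i * M i j * y j = ∑ i ∈ T, ∑ j ∈ T', f i j := by
    have step1 : ∀ (i j : U), x i * M i j * y j = x i * f i j * y j := by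
      intro i j
      by_cases hi : (i : Fin n) ∈ T
      · by_cases hj : (j : Fin n) ∈ T'
        · rw [hM i j hi hj]
        · simp [hx, hy, hj]
      · simp [hx, hi]
    calc ∑ i : U, ∑ j : U, x i * M i j * y j
        = ∑ i : U, ∑ j : U, x i * f i j * y j := by
          exact Finset.sum_congr rfl fun i _ => Finset.sum_congr rfl fun j _ => step1 i j
      _ = ∑ i : U, x i * ∑ j ∈ T', f i j := by
          refine Finset.sum_congr rfl fun i _ => ?_
          have : ∑ j : U, x i * f (i : Fin n) j * y j
              = ∑ j : U, (if (j : Fin n) ∈ T' then (1:ℝ) else 0) * (x i * f (i : Fin n) j) := by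
            refine Finset.sum_congr rfl fun j _ => ?_
            simp only [hy]; ring
          rw [this, ind_sum hT' (fun b => x i * f (i : Fin n) b), Finset.mul_sum]
      _ = ∑ i ∈ T, ∑ j ∈ T', f i j := by
          have : ∑ i : U, x i * ∑ j ∈ T', f (i : Fin n) j
              = ∑ i : U, (if (i : Fin n) ∈ T then (1:ℝ) else 0) * ∑ j ∈ T', f (i : Fin n) j := rfl
          rw [this, ind_sum hT (fun a => ∑ j ∈ T', f a j)]
  rw [← hsum, ← ind_norm hT x (fun i => rfl), ← ind_norm hT' y (fun i => rfl)]
  exact quad_bound M x y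

/-- **Theorem 1.** For an adjacency matrix `A` from a `γ`-corrupt SBM with communities
`Ω_k = {i : z i = k}`, connectivity `Γ`, inlier set `F` (on which `A` agrees with the
uncorrupted sample `A₀`), and nonempty disjoint blocks `S₁,…,S_K` with union `S`,
`∑_{k≤l} |Γ_{kl} − Γ̂_{kl}|
  ≤ (K²/min_k |Ω_k∩S_k∩F|) (max_k Γ_{kk} + ‖A_F − 𝔼[A]_F‖ + ‖A_S − Q̂(S)‖)`. -/
theorem stmt6 {n K : ℕ} (hK : 0 < K)
    (γ : ℝ) (hγ0 : 0 ≤ γ) (hγ : γ < 1 / 2)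
    (z : Fin n → Fin K) (Γ : Matrix (Fin K) (Fin K) ℝ)
    (hΓsymm : Γ.IsSymm) (hΓrange : ∀ k l, Γ k l ∈ Set.Icc (0 : ℝ) 1)
    (A A₀ : Matrix (Fin n) (Fin n) ℝ) (hA : A.IsSymm) (hA₀ : A₀.IsSymm)
    (EA : Matrix (Fin n) (Fin n) ℝ)
    (hEA : EA = Matrix.of (fun i j => Γ (z i) (z j))
        - Matrix.diagonal (fun i => Γ (z i) (z i)))
    (F : Finset (Fin n))
    (hcorrupt : (n : ℝ) - F.card ≤ γ * n)
    (hF : ∀ i ∈ F, ∀ j ∈ F, A i j = A₀ i j)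
    (Sk : Fin K → Finset (Fin n)) (hSne : ∀ k, (Sk k).Nonempty)
    (hdisj : ∀ k l, k ≠ l → Disjoint (Sk k) (Sk l))
    (S : Finset (Fin n)) (hS : S = Finset.univ.biUnion Sk)
    (m : ℕ)
    (hm : m = Finset.univ.inf' (Finset.univ_nonempty_iff.mpr ⟨⟨0, hK⟩⟩)
        (fun k => (((Finset.univ.filter (fun i => z i = k)) ∩ Sk k ∩ F).card)))
    (hm1 : 1 ≤ m) :
    (∑ k : Fin K, ∑ l ∈ Finset.Ici k, |Γ k l - empDensity A Sk k l|)
      ≤ ((K : ℝ) ^ 2 / m)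
        * ((Finset.univ.sup' (Finset.univ_nonempty_iff.mpr ⟨⟨0, hK⟩⟩) fun k => Γ k k)
            + specNorm (restrict (A - EA) F)
            + specNorm (restrict A S - Qhat A Sk S)) := by
  classical
  set D := specNorm (_root_.restrict (A - EA) F) with hDdef
  set E := specNorm (_root_.restrict A S - Qhat A Sk S) with hEdef
  set MG := (Finset.univ.sup' (Finset.univ_nonempty_iff.mpr ⟨⟨0, hK⟩⟩) fun k => Γ k k)
    with hMGdef
  set G := empDensity A Sk with hGdef
  set T : Fin K → Finset (Fin n) :=
    fun k => (Finset.univ.filter (fun i => z i = k)) ∩ Sk k ∩ F with hTdef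
  have hD0 : 0 ≤ D := norm_nonneg _
  have hE0 : 0 ≤ E := norm_nonneg _
  have hΓM : ∀ k, Γ k k ≤ MG := fun k => Finset.le_sup' (fun k => Γ k k) (Finset.mem_univ k)
  have hMG0 : 0 ≤ MG := le_trans (hΓrange ⟨0, hK⟩ ⟨0, hK⟩).1 (hΓM ⟨0, hK⟩)
  have hm0 : (0 : ℝ) < m := by exact_mod_cast hm1
  have hmT : ∀ k, (m : ℝ) ≤ (T k).card := by
    intro k
    have h := Finset.inf'_le (s := (Finset.univ : Finset (Fin K)))
      (f := fun k => (((Finset.univ.filter (fun i => z i = k)) ∩ Sk k ∩ F).card))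
      (Finset.mem_univ k)
    rw [← hm] at h
    exact_mod_cast h
  have hT0 : ∀ k, (0 : ℝ) < (T k).card := fun k => lt_of_lt_of_le hm0 (hmT k)
  have hTF : ∀ k, T k ⊆ F := fun k => Finset.inter_subset_right
  have hTSk : ∀ k, T k ⊆ Sk k := fun k =>
    Finset.inter_subset_left.trans Finset.inter_subset_right
  have hTS : ∀ k, T k ⊆ S := fun k => (hTSk k).trans
    (by rw [hS]; exact Finset.subset_biUnion_of_mem Sk (Finset.mem_univ k))
  have hTz : ∀ k, ∀ i ∈ T k, z i = k := by
    intro k i hi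
    exact (Finset.mem_filter.mp ((Finset.mem_inter.mp
      ((Finset.mem_inter.mp hi).1)).1)).2
  have hTd : ∀ k l, k ≠ l → Disjoint (T k) (T l) :=
    fun k l h => (hdisj k l h).mono (hTSk k) (hTSk l)
  -- value of Qhat on blocks
  have hQval : ∀ (k l : Fin K) (i j : S), (i : Fin n) ∈ Sk k → (j : Fin n) ∈ Sk l →
      (_root_.restrict A S - Qhat A Sk S) i j = A i j - G k l := by
    intro k l i j hik hjl
    have hindi : ∀ d, indicatorMatrix Sk S i d = if d = k then (1:ℝ) else 0 := by
      intro d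
      by_cases hdk : d = k
      · subst hdk; simp [indicatorMatrix, hik]
      · have hni : (i : Fin n) ∉ Sk d := fun h =>
          (Finset.disjoint_left.mp (hdisj d k hdk)) h hik
        simp [indicatorMatrix, hni, hdk]
    have hindj : ∀ d, indicatorMatrix Sk S j d = if d = l then (1:ℝ) else 0 := by
      intro d
      by_cases hdl : d = l
      · subst hdl; simp [indicatorMatrix, hjl]
      · have hnj : (j : Fin n) ∉ Sk d := fun h =>
          (Finset.disjoint_left.mp (hdisj d l hdl)) h hjl
        simp [indicatorMatrix, hnj, hdl]
    have hQ : Qhat A Sk S i j = G k l := by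
      show (indicatorMatrix Sk S * empDensity A Sk * (indicatorMatrix Sk S)ᵀ) i j = G k l
      rw [Matrix.mul_apply]
      calc ∑ c, (indicatorMatrix Sk S * empDensity A Sk) i c * (indicatorMatrix Sk S)ᵀ c j
          = ∑ c, (∑ d, (if d = k then (1:ℝ) else 0) * empDensity A Sk d c)
              * (if c = l then (1:ℝ) else 0) := by
            refine Finset.sum_congr rfl fun c _ => ?_
            rw [Matrix.mul_apply, Matrix.transpose_apply, hindj c]
            congr 1
            exact Finset.sum_congr rfl fun d _ => by rw [hindi d]
        _ = ∑ c, empDensity A Sk k c * (if c = l then (1:ℝ) else 0) := by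
            refine Finset.sum_congr rfl fun c _ => ?_
            congr 1
            simp [ite_mul]
        _ = G k l := by simp [hGdef]
    show A i j - Qhat A Sk S i j = A i j - G k l
    rw [hQ]
  -- sum of EA over blocks
  have hEAsum : ∀ k l, ∑ i ∈ T k, ∑ j ∈ T l, EA i j
      = ((T k).card : ℝ) * ((T l).card : ℝ) * Γ k l
        - (if k = l then ((T k).card : ℝ) * Γ k k else 0) := by
    intro k l
    have hpt : ∀ i ∈ T k, ∀ j ∈ T l, EA i j = Γ k l - (if i = j then Γ k k else 0) := by
      intro i hi j hj
      rw [hEA]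
      simp only [Matrix.sub_apply, Matrix.of_apply, Matrix.diagonal_apply]
      rw [hTz k i hi, hTz l j hj]
    calc ∑ i ∈ T k, ∑ j ∈ T l, EA i j
        = ∑ i ∈ T k, ∑ j ∈ T l, (Γ k l - if i = j then Γ k k else 0) :=
          Finset.sum_congr rfl fun i hi => Finset.sum_congr rfl fun j hj => hpt i hi j hj
      _ = ((T k).card : ℝ) * (((T l).card : ℝ) * Γ k l)
          - ∑ i ∈ T k, ∑ j ∈ T l, (if i = j then Γ k k else 0) := by
          simp only [Finset.sum_sub_distrib, Finset.sum_const, nsmul_eq_mul]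
      _ = ((T k).card : ℝ) * ((T l).card : ℝ) * Γ k l
          - (if k = l then ((T k).card : ℝ) * Γ k k else 0) := by
          have hdiag : ∑ i ∈ T k, ∑ j ∈ T l, (if i = j then Γ k k else 0)
              = (if k = l then ((T k).card : ℝ) * Γ k k else 0) := by
            have h1 : ∀ i ∈ T k, ∑ j ∈ T l, (if i = j then Γ k k else 0)
                = if i ∈ T l then Γ k k else 0 :=
              fun i _ => Finset.sum_ite_eq (T l) i (fun _ => Γ k k)
            rw [Finset.sum_congr rfl h1, Finset.sum_ite_mem]
            rw [Finset.sum_const, nsmul_eq_mul]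
            by_cases hkl : k = l
            · subst hkl; rw [Finset.inter_self, if_pos rfl]
            · rw [if_neg hkl, Finset.card_eq_zero.mpr
                (Finset.disjoint_iff_inter_eq_empty.mp (hTd k l hkl)), Nat.cast_zero,
                zero_mul]
          rw [hdiag]; ring
  -- key algebraic identity
  have keyid : ∀ k l : Fin K, ((T k).card : ℝ) * ((T l).card : ℝ) * (Γ k l - G k l)
      = (∑ i ∈ T k, ∑ j ∈ T l, (EA i j - A i j))
        + (∑ i ∈ T k, ∑ j ∈ T l, (A i j - G k l))
        + (if k = l then ((T k).card : ℝ) * Γ k k else 0) := by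
    intro k l
    have h2 : ∑ i ∈ T k, ∑ j ∈ T l, (EA i j - A i j)
        = (∑ i ∈ T k, ∑ j ∈ T l, EA i j) - (∑ i ∈ T k, ∑ j ∈ T l, A i j) := by
      simp only [Finset.sum_sub_distrib]
    have h3 : ∑ i ∈ T k, ∑ j ∈ T l, (A i j - G k l)
        = (∑ i ∈ T k, ∑ j ∈ T l, A i j)
          - ((T k).card : ℝ) * ((T l).card : ℝ) * G k l := by
      simp only [Finset.sum_sub_distrib, Finset.sum_const, nsmul_eq_mul]
      ring
    rw [h2, h3, hEAsum k l]; ring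
  -- the two spectral bounds
  have bound1 : ∀ k l : Fin K, |∑ i ∈ T k, ∑ j ∈ T l, (EA i j - A i j)|
      ≤ D * Real.sqrt (T k).card * Real.sqrt (T l).card := by
    intro k l
    have hb := block_bound F (T k) (T l) (hTF k) (hTF l)
      (_root_.restrict (A - EA) F) (fun a b => A a b - EA a b)
      (fun i j _ _ => rfl)
    have hswap : ∑ i ∈ T k, ∑ j ∈ T l, (EA i j - A i j)
        = -∑ i ∈ T k, ∑ j ∈ T l, (A i j - EA i j) := by
      rw [← Finset.sum_neg_distrib]
      exact Finset.sum_congr rfl fun i _ => by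
        rw [← Finset.sum_neg_distrib]
        exact Finset.sum_congr rfl fun j _ => by ring
    rw [hswap, abs_neg]
    exact hb
  have bound2 : ∀ k l : Fin K, |∑ i ∈ T k, ∑ j ∈ T l, (A i j - G k l)|
      ≤ E * Real.sqrt (T k).card * Real.sqrt (T l).card := by
    intro k l
    exact block_bound S (T k) (T l) (hTS k) (hTS l)
      (_root_.restrict A S - Qhat A Sk S) (fun a b => A a b - G k l)
      (fun i j hi hj => hQval k l i j (hTSk k hi) (hTSk l hj))
  -- per-pair bound
  have hpair : ∀ k l : Fin K, |Γ k l - G k l|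
      ≤ ((if k = l then MG else 0) + D + E) / m := by
    intro k l
    set tk : ℝ := ((T k).card : ℝ) with htk
    set tl : ℝ := ((T l).card : ℝ) with htl
    have htk0 : 0 < tk := hT0 k
    have htl0 : 0 < tl := hT0 l
    set s : ℝ := Real.sqrt tk * Real.sqrt tl with hsdef
    have hs0 : 0 ≤ s := mul_nonneg (Real.sqrt_nonneg _) (Real.sqrt_nonneg _)
    have hss : s * s = tk * tl := by
      rw [hsdef, mul_mul_mul_comm, Real.mul_self_sqrt htk0.le, Real.mul_self_sqrt htl0.le]
    have hms : (m : ℝ) ≤ s := by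
      have h1 : Real.sqrt m ≤ Real.sqrt tk := Real.sqrt_le_sqrt (hmT k)
      have h2 : Real.sqrt m ≤ Real.sqrt tl := Real.sqrt_le_sqrt (hmT l)
      calc (m : ℝ) = Real.sqrt m * Real.sqrt m := (Real.mul_self_sqrt hm0.le).symm
        _ ≤ s := mul_le_mul h1 h2 (Real.sqrt_nonneg _) (Real.sqrt_nonneg _)
    set c : ℝ := (if k = l then tk * Γ k k else 0) with hcdef
    have hc0 : 0 ≤ c := by
      rw [hcdef]; split
      · exact mul_nonneg htk0.le (hΓrange k k).1
      · exact le_refl 0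
    have habs : |Γ k l - G k l| * (tk * tl) ≤ (D + E) * s + c := by
      have h1 : |tk * tl * (Γ k l - G k l)| ≤ D * s + E * s + c := by
        rw [keyid k l]
        refine (abs_add_three _ _ _).trans ?_
        have e1 := bound1 k l
        have e2 := bound2 k l
        have e3 : |c| = c := abs_of_nonneg hc0
        calc |∑ i ∈ T k, ∑ j ∈ T l, (EA i j - A i j)|
              + |∑ i ∈ T k, ∑ j ∈ T l, (A i j - G k l)| + |c|
            ≤ D * Real.sqrt tk * Real.sqrt tl + E * Real.sqrt tk * Real.sqrt tl + c := by
              rw [e3]; exact add_le_add (add_le_add e1 e2) le_rfl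
          _ = D * s + E * s + c := by rw [hsdef]; ring
      calc |Γ k l - G k l| * (tk * tl) = |tk * tl * (Γ k l - G k l)| := by
            rw [abs_mul, abs_of_nonneg (mul_pos htk0 htl0).le]; ring
        _ ≤ D * s + E * s + c := h1
        _ = (D + E) * s + c := by ring
    rw [le_div_iff₀ hm0]
    set ite' : ℝ := (if k = l then MG else 0) with hite'
    have hfin : |Γ k l - G k l| * (m : ℝ) * (tk * tl) ≤ (ite' + D + E) * (tk * tl) := by
      have h6 : (D + E) * (s * m) ≤ (D + E) * (tk * tl) := by
        refine mul_le_mul_of_nonneg_left ?_ (add_nonneg hD0 hE0)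
        calc s * (m : ℝ) ≤ s * s := mul_le_mul_of_nonneg_left hms hs0
          _ = tk * tl := hss
      have h7 : c * m ≤ ite' * (tk * tl) := by
        rw [hcdef, hite']
        by_cases hkl : k = l
        · rw [if_pos hkl, if_pos hkl]
          subst hkl
          have : Γ k k * m ≤ MG * tl :=
            mul_le_mul (hΓM k) (hmT k) hm0.le hMG0
          calc tk * Γ k k * (m : ℝ) = tk * (Γ k k * m) := by ring
            _ ≤ tk * (MG * tk) := mul_le_mul_of_nonneg_left this htk0.le
            _ = MG * (tk * tk) := by ring
        · rw [if_neg hkl, if_neg hkl]; simp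
      calc |Γ k l - G k l| * (m : ℝ) * (tk * tl)
          = (|Γ k l - G k l| * (tk * tl)) * m := by ring
        _ ≤ ((D + E) * s + c) * m := mul_le_mul_of_nonneg_right habs hm0.le
        _ = (D + E) * (s * m) + c * m := by ring
        _ ≤ (D + E) * (tk * tl) + ite' * (tk * tl) := add_le_add h6 h7
        _ = (ite' + D + E) * (tk * tl) := by ring
    exact le_of_mul_le_mul_right hfin (mul_pos htk0 htl0)
  -- sum up
  have hsum1 : ∀ k : Fin K, ∑ l ∈ Finset.Ici k, ((if k = l then MG else 0) + D + E)
      ≤ MG + (K : ℝ) * (D + E) := by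
    intro k
    have hre : ∀ l ∈ Finset.Ici k, ((if k = l then MG else 0) + D + E)
        = (if k = l then MG else 0) + (D + E) := fun l _ => by ring
    rw [Finset.sum_congr rfl hre, Finset.sum_add_distrib]
    have h1 : ∑ l ∈ Finset.Ici k, (if k = l then MG else 0) = MG := by
      rw [Finset.sum_ite_eq (Finset.Ici k) k (fun _ => MG),
        if_pos (Finset.mem_Ici.mpr le_rfl)]
    have h2 : ∑ _l ∈ Finset.Ici k, (D + E) ≤ (K : ℝ) * (D + E) := by
      rw [Finset.sum_const, nsmul_eq_mul]
      refine mul_le_mul_of_nonneg_right ?_ (add_nonneg hD0 hE0)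
      have : (Finset.Ici k).card ≤ K := by
        calc (Finset.Ici k).card ≤ (Finset.univ : Finset (Fin K)).card :=
              Finset.card_le_univ _
          _ = K := by simp
      exact_mod_cast this
    rw [h1]
    exact add_le_add le_rfl h2
  calc (∑ k : Fin K, ∑ l ∈ Finset.Ici k, |Γ k l - G k l|)
      ≤ ∑ k : Fin K, ∑ l ∈ Finset.Ici k, ((if k = l then MG else 0) + D + E) / m :=
        Finset.sum_le_sum fun k _ => Finset.sum_le_sum fun l _ => hpair k l
    _ = (∑ k : Fin K, ∑ l ∈ Finset.Ici k, ((if k = l then MG else 0) + D + E)) / m := by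
        rw [Finset.sum_div]
        exact Finset.sum_congr rfl fun k _ => by rw [Finset.sum_div]
    _ ≤ ((K : ℝ) * (MG + (K : ℝ) * (D + E))) / m := by
        apply div_le_div_of_nonneg_right ?_ hm0.le
        calc ∑ k : Fin K, ∑ l ∈ Finset.Ici k, ((if k = l then MG else 0) + D + E)
            ≤ ∑ _k : Fin K, (MG + (K : ℝ) * (D + E)) :=
              Finset.sum_le_sum fun k _ => hsum1 k
          _ = (K : ℝ) * (MG + (K : ℝ) * (D + E)) := by
              rw [Finset.sum_const, nsmul_eq_mul]; simp
    _ ≤ ((K : ℝ) ^ 2 * (MG + D + E)) / m := by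
        apply div_le_div_of_nonneg_right ?_ hm0.le
        have hK1 : (1 : ℝ) ≤ (K : ℝ) := by exact_mod_cast hK
        have hKK : (K : ℝ) ≤ (K : ℝ) ^ 2 := by nlinarith
        have h1 : (K : ℝ) * MG ≤ (K : ℝ) ^ 2 * MG := mul_le_mul_of_nonneg_right hKK hMG0
        nlinarith [h1, hD0, hE0]
    _ = ((K : ℝ) ^ 2 / m) * (MG + D + E) := by ring
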